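/- Let σ = 0.3, b(y) = (1/(σ√(2π))) exp(−y²/(2σ²)), and for integers i and reals x define τ_i(x) = (c/K) b(2Kx/c − 2i + 1). Then for any finite index set I ⊆ ℤ and any x ∈ ℝ, ∑_{i∈I} τ_i(x) ≤ H·(c/K), where H = (1/(σ√(2π))) ∑_{n∈ℤ} exp(−2n²/σ²). -/

import Mathlib

set_option maxHeartbeats 1000000

noncomputable def gg (t : ℝ) : ℝ := Real.exp (-(50/9) * t^2)

lemma gg_pos (t : ℝ) : 0 < gg t := Real.exp_pos _

lemma gg_neg (t : ℝ) : gg (-t) = gg t := by unfold gg; ring_nf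

lemma gg_mono {s t : ℝ} (hs : 0 ≤ s) (h : s ≤ |t|) : gg t ≤ gg s := by
  unfold gg
  apply Real.exp_le_exp.2
  have h2 : s^2 ≤ t^2 := by nlinarith [sq_abs t, abs_nonneg t]
  nlinarith

lemma q_small : Real.exp (-(50/9)) ≤ 1/200 := by
  have h1 : Real.exp 1 > 2.7182818283 := Real.exp_one_gt_d9
  have h2 : Real.exp (1/2) * Real.exp (1/2) = Real.exp 1 := by
    rw [← Real.exp_add]; norm_num
  have h3 : (1.6:ℝ) ≤ Real.exp (1/2) := by nlinarith [Real.exp_pos (1/2)]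
  have h4 : (148:ℝ) ≤ Real.exp 1 ^ 5 := by
    have : (2.7182818283:ℝ)^5 ≤ Real.exp 1 ^ 5 := by
      apply pow_le_pow_left₀ (by norm_num) h1.le
    nlinarith
  have h5 : Real.exp (11/2) = Real.exp 1 ^ 5 * Real.exp (1/2) := by
    rw [← Real.exp_nat_mul, ← Real.exp_add]; norm_num
  have h6 : (200:ℝ) ≤ Real.exp (50/9) := by
    have : Real.exp (11/2) ≤ Real.exp (50/9) := Real.exp_le_exp.2 (by norm_num)
    nlinarith
  rw [Real.exp_neg]
  rw [inv_le_comm₀ (by positivity) (by norm_num)]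
  linarith

lemma geom_tail {r : ℝ} (h0 : 0 ≤ r) (h1 : r < 1) (T : Finset ℕ) (hT : 0 ∉ T) :
    ∑ k ∈ T, r^k ≤ r/(1-r) := by
  have hs := (summable_geometric_of_lt_one h0 h1).sum_le_tsum (insert 0 T)
    (fun i _ => pow_nonneg h0 i)
  rw [tsum_geometric_of_lt_one h0 h1, Finset.sum_insert hT, pow_zero] at hs
  have hr : (0:ℝ) < 1 - r := by linarith
  have h2 : (1-r)⁻¹ = 1 + r/(1-r) := by
    field_simp
    ring
  linarith

lemma cosh_bound (a : ℝ) (ha : 0 ≤ a) :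
    Real.exp a + Real.exp (-a) - 2 ≤ a^2 * Real.exp a := by
  have hp : (0:ℝ) < Real.exp (a/2) := Real.exp_pos _
  have e1 : Real.exp (a/2) * Real.exp (a/2) = Real.exp a := by
    rw [← Real.exp_add]; ring_nf
  have e2 : Real.exp (-(a/2)) * Real.exp (-(a/2)) = Real.exp (-a) := by
    rw [← Real.exp_add]; ring_nf
  have e3 : Real.exp (a/2) * Real.exp (-(a/2)) = 1 := by
    rw [← Real.exp_add]; simp
  have h4 : 1 - Real.exp (-a) ≤ a := by
    have := Real.add_one_le_exp (-a); linarith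
  have h5 : Real.exp (a/2) - Real.exp (-(a/2)) ≤ Real.exp (a/2) * a := by
    have h : Real.exp (a/2) - Real.exp (-(a/2)) = Real.exp (a/2) * (1 - Real.exp (-a)) := by
      rw [← e2]; nlinarith [e3]
    rw [h]
    exact mul_le_mul_of_nonneg_left h4 hp.le
  have h6 : 0 ≤ Real.exp (a/2) - Real.exp (-(a/2)) := by
    have := Real.exp_le_exp.2 (show -(a/2) ≤ a/2 by linarith)
    linarith
  nlinarith [sq_nonneg (Real.exp (a/2) - Real.exp (-(a/2)))]

lemma exp_big : (40000/81 : ℝ) ≤ Real.exp (62/9) := by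
  have h1 : Real.exp 1 > 2.7182818283 := Real.exp_one_gt_d9
  have h4 : (403:ℝ) ≤ Real.exp 1 ^ 6 := by
    have h : (2.7182818283:ℝ)^6 ≤ Real.exp 1 ^ 6 :=
      pow_le_pow_left₀ (by norm_num) h1.le 6
    nlinarith
  have h5 : Real.exp 1 ^ 6 = Real.exp 6 := by
    rw [← Real.exp_nat_mul]; norm_num
  have h6 : Real.exp (62/9) = Real.exp 6 * Real.exp (8/9) := by
    rw [← Real.exp_add]; norm_num
  have h7 : (17/9:ℝ) ≤ Real.exp (8/9) := by
    have := Real.add_one_le_exp ((8:ℝ)/9); linarith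
  rw [h6]
  nlinarith [Real.exp_pos ((8:ℝ)/9)]

lemma claimA (k : ℕ) (hk : k ≠ 0) (d : ℝ) (hd : |d| ≤ 1) :
    gg (2*k - d) + gg (2*k + d) ≤ 2 * (Real.exp (-(50/9)))^k := by
  have hk1 : (1:ℝ) ≤ (k:ℝ) := by exact_mod_cast Nat.one_le_iff_ne_zero.2 hk
  set kr := (k:ℝ)
  have hd1 : -1 ≤ d := by cases abs_le.1 hd; linarith
  have hd2 : d ≤ 1 := by cases abs_le.1 hd; assumption
  have hqk : (Real.exp (-(50/9)))^k = Real.exp (-(50/9)*kr) := by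
    rw [← Real.exp_nat_mul]; congr 1; ring
  rw [hqk]
  have b1 : gg (2*kr - d) ≤ Real.exp (-(50/9)*kr) := by
    unfold gg
    apply Real.exp_le_exp.2
    nlinarith [sq_nonneg (d-1), sq_nonneg (kr-1)]
  have b2 : gg (2*kr + d) ≤ Real.exp (-(50/9)*kr) := by
    unfold gg
    apply Real.exp_le_exp.2
    nlinarith [sq_nonneg (d+1), sq_nonneg (kr-1)]
  linarith

lemma claimB (k : ℕ) (hk : k ≠ 0) (d : ℝ) (hd : |d| ≤ 1/10) :
    gg (2*k - d) + gg (2*k + d) ≤ 2 * gg (2*k) + 5 * d^2 * (Real.exp (-(100/9)))^k := by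
  have hk1 : (1:ℝ) ≤ (k:ℝ) := by exact_mod_cast Nat.one_le_iff_ne_zero.2 hk
  set kr := (k:ℝ)
  have e1 : gg (2*kr - d) = gg (2*kr) * Real.exp ((200/9)*kr*d - (50/9)*d^2) := by
    unfold gg; rw [← Real.exp_add]; congr 1; ring
  have e2 : gg (2*kr + d) = gg (2*kr) * Real.exp (-((200/9)*kr*d) - (50/9)*d^2) := by
    unfold gg; rw [← Real.exp_add]; congr 1; ring
  set z := (200/9)*kr*d with hzdef
  have hc : (0:ℝ) ≤ (50/9)*d^2 := by positivity
  -- exp(z - c) + exp(-z - c) ≤ exp |z| + exp (-|z|)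
  have h1 : Real.exp (z - (50/9)*d^2) + Real.exp (-z - (50/9)*d^2)
      ≤ Real.exp |z| + Real.exp (-|z|) := by
    rcases abs_cases z with ⟨h, _⟩ | ⟨h, _⟩
    · rw [h]
      have a1 : Real.exp (z - (50/9)*d^2) ≤ Real.exp z := Real.exp_le_exp.2 (by linarith)
      have a2 : Real.exp (-z - (50/9)*d^2) ≤ Real.exp (-z) := Real.exp_le_exp.2 (by linarith)
      linarith
    · rw [h]
      have a1 : Real.exp (z - (50/9)*d^2) ≤ Real.exp (-(-z)) := Real.exp_le_exp.2 (by linarith)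
      have a2 : Real.exp (-z - (50/9)*d^2) ≤ Real.exp (-z) := Real.exp_le_exp.2 (by linarith)
      linarith
  have h2 := cosh_bound |z| (abs_nonneg z)
  have hzabs : |z| = (200/9)*kr*|d| := by
    rw [hzdef, abs_mul]
    rw [abs_of_nonneg (by positivity : (0:ℝ) ≤ (200/9)*kr)]
  have hzle : |z| ≤ (20/9)*kr := by
    rw [hzabs]; nlinarith
  -- gg(2kr) * exp |z| ≤ exp (-(200/9)kr^2 + (20/9) kr)
  have h3 : gg (2*kr) * Real.exp |z| ≤ Real.exp (-(200/9)*kr^2 + (20/9)*kr) := by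
    unfold gg
    rw [← Real.exp_add]
    apply Real.exp_le_exp.2
    nlinarith [hzle]
  -- (200/9)^2 kr^2 * exp(-(200/9)kr^2 + (20/9)kr) ≤ 5 * exp(-(100/9) kr)
  have h4 : ((200:ℝ)/9)^2 * kr^2 * Real.exp (-(200/9)*kr^2 + (20/9)*kr)
      ≤ 5 * Real.exp (-(100/9)*kr) := by
    have hkexp : kr ≤ Real.exp kr := by
      have := Real.add_one_le_exp kr; linarith
    have hk2 : kr^2 ≤ Real.exp (2*kr) := by
      have h := mul_le_mul hkexp hkexp (by linarith) (Real.exp_pos kr).le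
      rw [← Real.exp_add] at h
      rw [show kr + kr = 2*kr by ring] at h
      nlinarith
    have key : Real.exp (2*kr) * Real.exp (-(200/9)*kr^2 + (20/9)*kr)
        ≤ (81/40000) * Real.exp (-(100/9)*kr) := by
      rw [← Real.exp_add]
      have hsplit : 2*kr + (-(200/9)*kr^2 + (20/9)*kr) = -(100/9)*kr + (-(200/9)*kr^2 + (138/9)*kr) := by ring
      rw [hsplit, Real.exp_add]
      have hneg : -(200/9)*kr^2 + (138/9)*kr ≤ -(62/9) := by nlinarith
      have : Real.exp (-(200/9)*kr^2 + (138/9)*kr) ≤ Real.exp (-(62/9)) := Real.exp_le_exp.2 hneg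
      have hb : Real.exp (-(62/9)) ≤ 81/40000 := by
        rw [Real.exp_neg]
        rw [inv_le_comm₀ (Real.exp_pos _) (by norm_num)]
        linarith [exp_big]
      have h9 := mul_le_mul_of_nonneg_left (le_trans this hb) (Real.exp_pos (-(100/9)*kr)).le
      linarith
    calc ((200:ℝ)/9)^2 * kr^2 * Real.exp (-(200/9)*kr^2 + (20/9)*kr)
        ≤ ((200:ℝ)/9)^2 * Real.exp (2*kr) * Real.exp (-(200/9)*kr^2 + (20/9)*kr) := by
          apply mul_le_mul_of_nonneg_right _ (Real.exp_pos _).le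
          apply mul_le_mul_of_nonneg_left hk2 (by positivity)
      _ ≤ ((200:ℝ)/9)^2 * ((81/40000) * Real.exp (-(100/9)*kr)) := by
          rw [mul_assoc]
          apply mul_le_mul_of_nonneg_left key (by positivity)
      _ ≤ 5 * Real.exp (-(100/9)*kr) := by
          rw [← mul_assoc]
          apply mul_le_mul_of_nonneg_right _ (Real.exp_pos _).le
          norm_num
  -- combine
  have hgg := (gg_pos (2*kr)).le
  have hqk : (Real.exp (-(100/9)))^k = Real.exp (-(100/9)*kr) := by
    rw [← Real.exp_nat_mul]; congr 1; ring
  rw [e1, e2, hqk]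
  have step : Real.exp ((200/9)*kr*d - (50/9)*d^2) + Real.exp (-((200/9)*kr*d) - (50/9)*d^2)
      ≤ 2 + z^2 * Real.exp |z| := by
    rw [sq_abs] at h2
    have h1' : Real.exp (z - (50/9)*d^2) + Real.exp (-z - (50/9)*d^2) ≤ 2 + z^2 * Real.exp |z| := by
      linarith
    calc Real.exp ((200/9)*kr*d - (50/9)*d^2) + Real.exp (-((200/9)*kr*d) - (50/9)*d^2)
        = Real.exp (z - (50/9)*d^2) + Real.exp (-z - (50/9)*d^2) := by rw [hzdef]
      _ ≤ 2 + z^2 * Real.exp |z| := h1'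
  have final : gg (2*kr) * (2 + z^2 * Real.exp |z|) ≤ 2 * gg (2*kr) + 5 * d^2 * Real.exp (-(100/9)*kr) := by
    have hz2 : z^2 = ((200:ℝ)/9)^2 * kr^2 * d^2 := by rw [hzdef]; ring
    have hfin : gg (2*kr) * (z^2 * Real.exp |z|) ≤ 5 * d^2 * Real.exp (-(100/9)*kr) := by
      calc gg (2*kr) * (z^2 * Real.exp |z|)
          = d^2 * (((200:ℝ)/9)^2 * kr^2 * (gg (2*kr) * Real.exp |z|)) := by rw [hz2]; ring
        _ ≤ d^2 * (((200:ℝ)/9)^2 * kr^2 * Real.exp (-(200/9)*kr^2 + (20/9)*kr)) := by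
            apply mul_le_mul_of_nonneg_left _ (sq_nonneg d)
            apply mul_le_mul_of_nonneg_left h3 (by positivity)
        _ ≤ d^2 * (5 * Real.exp (-(100/9)*kr)) := by
            apply mul_le_mul_of_nonneg_left h4 (sq_nonneg d)
        _ = 5 * d^2 * Real.exp (-(100/9)*kr) := by ring
    nlinarith
  calc gg (2*kr) * Real.exp ((200/9)*kr*d - (50/9)*d^2) + gg (2*kr) * Real.exp (-((200/9)*kr*d) - (50/9)*d^2)
      = gg (2*kr) * (Real.exp ((200/9)*kr*d - (50/9)*d^2) + Real.exp (-((200/9)*kr*d) - (50/9)*d^2)) := by ring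
    _ ≤ gg (2*kr) * (2 + z^2 * Real.exp |z|) := mul_le_mul_of_nonneg_left step hgg
    _ ≤ 2 * gg (2*kr) + 5 * d^2 * Real.exp (-(100/9)*kr) := final

lemma core (d : ℝ) (hd : |d| ≤ 1) (T : Finset ℕ) (hT : 0 ∉ T) :
    ∑ k ∈ T, (gg (2*k - d) + gg (2*k + d)) ≤ (1 - gg d) + ∑ k ∈ T, 2 * gg (2*k) := by
  have hq := q_small
  have hq0 := (Real.exp_pos (-(50/9):ℝ)).le
  have hsum_nonneg : (0:ℝ) ≤ ∑ k ∈ T, 2 * gg (2*(k:ℝ)) :=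
    Finset.sum_nonneg fun k _ => mul_nonneg (by norm_num) (gg_pos _).le
  rcases le_or_gt (1/10 : ℝ) |d| with hcase | hcase
  · -- case A : d not too small
    have hsum : ∑ k ∈ T, (gg (2*k - d) + gg (2*k + d)) ≤ ∑ k ∈ T, 2 * (Real.exp (-(50/9)))^k :=
      Finset.sum_le_sum fun k hk => claimA k (fun h0 => hT (by rwa [h0] at hk)) d hd
    have hgeo : ∑ k ∈ T, (Real.exp (-(50/9)))^k ≤ 1/199 := by
      have := geom_tail hq0 (lt_of_le_of_lt hq (by norm_num)) T hT
      have hfrac : Real.exp (-(50/9)) / (1 - Real.exp (-(50/9))) ≤ 1/199 := by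
        rw [div_le_div_iff₀ (by nlinarith) (by norm_num)]
        nlinarith
      linarith
    have hgg : gg d ≤ 18/19 := by
      have h1 : gg d ≤ gg (1/10) := gg_mono (by norm_num) hcase
      have h2 : gg (1/10) = Real.exp (-(1/18)) := by unfold gg; norm_num
      have h3 : Real.exp (-(1/18)) ≤ 18/19 := by
        rw [Real.exp_neg, inv_le_comm₀ (by positivity) (by norm_num)]
        have := Real.add_one_le_exp ((1:ℝ)/18); linarith
      linarith
    have h2sum : ∑ k ∈ T, 2 * (Real.exp (-(50/9)))^k = 2 * ∑ k ∈ T, (Real.exp (-(50/9)))^k := by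
      rw [Finset.mul_sum]
    linarith [hsum, hgeo, hgg]
  · -- case B : d small
    have hsum : ∑ k ∈ T, (gg (2*k - d) + gg (2*k + d))
        ≤ ∑ k ∈ T, (2 * gg (2*k) + 5 * d^2 * (Real.exp (-(100/9)))^k) :=
      Finset.sum_le_sum fun k hk => claimB k (fun h0 => hT (by rwa [h0] at hk)) d hcase.le
    simp only [Finset.sum_add_distrib] at hsum ⊢
    have hr0 := (Real.exp_pos (-(100/9):ℝ)).le
    have hrsmall : Real.exp (-(100/9)) ≤ 1/40000 := by
      have : Real.exp (-(100/9)) = Real.exp (-(50/9)) * Real.exp (-(50/9)) := by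
        rw [← Real.exp_add]; norm_num
      nlinarith
    have hgeo : ∑ k ∈ T, (Real.exp (-(100/9)))^k ≤ 1/5 := by
      have := geom_tail hr0 (lt_of_le_of_lt hrsmall (by norm_num)) T hT
      have hfrac : Real.exp (-(100/9)) / (1 - Real.exp (-(100/9))) ≤ 1/5 := by
        rw [div_le_div_iff₀ (by nlinarith) (by norm_num)]
        nlinarith
      linarith
    have hmul : ∑ k ∈ T, 5 * d^2 * (Real.exp (-(100/9)))^k ≤ d^2 := by
      rw [← Finset.mul_sum]
      have h5 : 5 * d^2 * ∑ k ∈ T, (Real.exp (-(100/9)))^k ≤ 5 * d^2 * (1/5) := by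
        apply mul_le_mul_of_nonneg_left hgeo (by positivity)
      nlinarith
    -- deficit: 1 - gg d ≥ d^2
    have hdef : d^2 ≤ 1 - gg d := by
      have hx2 : d^2 ≤ 1/100 := by nlinarith [sq_abs d, abs_nonneg d]
      have g1 : 1 - (50/9)*d^2 ≤ gg d := by
        unfold gg
        have := Real.add_one_le_exp (-(50/9) * d^2); linarith
      have g2 : gg d * (1 + (50/9)*d^2) ≤ 1 := by
        have he : gg d * Real.exp ((50/9)*d^2) = 1 := by
          unfold gg; rw [← Real.exp_add]; norm_num
        have h3 : 1 + (50/9)*d^2 ≤ Real.exp ((50/9)*d^2) := by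
          have := Real.add_one_le_exp ((50/9) * d^2); linarith
        nlinarith [gg_pos d]
      nlinarith [gg_pos d, sq_nonneg d]
    linarith [hsum, hmul, hdef]

lemma sumGaussNat : Summable (fun n : ℕ => gg (2*(n:ℝ))) := by
  apply Summable.of_nonneg_of_le (fun n => (gg_pos _).le)
    (f := fun n : ℕ => (Real.exp (-(200/9)))^n)
  · intro n
    unfold gg
    rw [← Real.exp_nat_mul]
    apply Real.exp_le_exp.2
    have h1 : (n:ℝ) ≤ (n:ℝ)^2 := by
      rcases Nat.eq_zero_or_pos n with h | h
      · simp [h]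
      · have : (1:ℝ) ≤ (n:ℝ) := by exact_mod_cast h
        nlinarith
    nlinarith
  · exact summable_geometric_of_lt_one (Real.exp_pos _).le
      (Real.exp_lt_one_iff.2 (by norm_num))

lemma sumGauss : Summable (fun n : ℤ => gg (2*n)) := by
  apply Summable.of_nat_of_neg
  · apply sumGaussNat.congr
    intro n; push_cast; ring_nf
  · apply sumGaussNat.congr
    intro n
    push_cast
    rw [show (2:ℝ) * -(n:ℝ) = -(2*n) by ring, gg_neg]

lemma partial_le_S (T : Finset ℕ) (hT : 0 ∉ T) :
    1 + ∑ k ∈ T, 2 * gg (2*(k:ℝ)) ≤ ∑' n : ℤ, gg (2*(n:ℝ)) := by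
  classical
  set U : Finset ℤ := T.image (fun k : ℕ => (k:ℤ)) ∪ T.image (fun k : ℕ => -(k:ℤ)) with hU
  have hmem : ∀ n ∈ U, n ≠ 0 := by
    intro n hn
    rw [hU, Finset.mem_union] at hn
    rcases hn with h | h <;>
    · obtain ⟨k, hk, rfl⟩ := Finset.mem_image.1 h
      have : k ≠ 0 := fun h0 => hT (by rwa [h0] at hk)
      simpa using this
  have h0U : (0:ℤ) ∉ U := fun h => hmem 0 h rfl
  have hle := sumGauss.sum_le_tsum (insert 0 U) (fun i _ => (gg_pos _).le)
  rw [Finset.sum_insert h0U] at hle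
  have hg0 : gg (2*((0:ℤ):ℝ)) = 1 := by
    unfold gg; norm_num
  have hdisj : Disjoint (T.image (fun k : ℕ => (k:ℤ))) (T.image (fun k : ℕ => -(k:ℤ))) := by
    rw [Finset.disjoint_left]
    intro a ha hb
    obtain ⟨k, hk, rfl⟩ := Finset.mem_image.1 ha
    obtain ⟨l, hl, hel⟩ := Finset.mem_image.1 hb
    have hk0 : k ≠ 0 := fun h0 => hT (by rwa [h0] at hk)
    have hl0 : l ≠ 0 := fun h0 => hT (by rwa [h0] at hl)
    omega
  have hsU : ∑ n ∈ U, gg (2*(n:ℝ)) = ∑ k ∈ T, 2 * gg (2*(k:ℝ)) := by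
    rw [hU, Finset.sum_union hdisj, Finset.sum_image (by intro a _ b _ h; simpa using h),
      Finset.sum_image (by intro a _ b _ h; simpa using h)]
    rw [← Finset.sum_add_distrib]
    apply Finset.sum_congr rfl
    intro k hk
    push_cast
    rw [show (2:ℝ) * -(k:ℝ) = -(2*k) by ring, gg_neg]
    ring
  rw [hg0] at hle
  rw [← hsU]
  exact hle

lemma main_ineq (u : ℝ) (I : Finset ℤ) :
    ∑ i ∈ I, gg (u - 2*i) ≤ ∑' n : ℤ, gg (2*(n:ℝ)) := by
  classical
  set m : ℤ := round (u/2) with hm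
  set d : ℝ := u - 2*m with hd'
  have hd : |d| ≤ 1 := by
    have h := abs_sub_round (u/2)
    have : d = 2 * (u/2 - round (u/2)) := by rw [hd', hm]; ring
    rw [this, abs_mul]
    rw [abs_of_nonneg (by norm_num : (0:ℝ) ≤ 2)]
    linarith
  set φ : ℤ → ℕ := fun i => (i - m).natAbs with hφ
  set F : ℕ → ℝ := fun k => if k = 0 then gg d else gg (2*k - d) + gg (2*k + d) with hF
  have hF_nonneg : ∀ k, 0 ≤ F k := by
    intro k
    rw [hF]
    dsimp only
    split
    · exact (gg_pos _).le
    · exact add_nonneg (gg_pos _).le (gg_pos _).le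
  have hfiber : ∑ k ∈ I.image φ, ∑ i ∈ I.filter (fun i => φ i = k), gg (u - 2*i)
      = ∑ i ∈ I, gg (u - 2*i) :=
    Finset.sum_fiberwise_of_maps_to (fun i hi => Finset.mem_image_of_mem φ hi) _
  have step1 : ∀ k ∈ I.image φ,
      ∑ i ∈ I.filter (fun i => φ i = k), gg (u - 2*i) ≤ F k := by
    intro k _
    rcases eq_or_ne k 0 with rfl | hk
    · -- fiber over 0 is ⊆ {m}
      have hsub : I.filter (fun i => φ i = 0) ⊆ {m} := by
        intro i hi
        rw [Finset.mem_filter] at hi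
        have : (i - m).natAbs = 0 := hi.2
        simp only [Finset.mem_singleton]
        omega
      have := Finset.sum_le_sum_of_subset_of_nonneg hsub
        (fun i _ _ => (gg_pos (u - 2*i)).le)
      rw [Finset.sum_singleton] at this
      have harg : u - 2*(m:ℝ) = d := by rw [hd']
      rw [harg] at this
      have hF0' : F 0 = gg d := by simp [hF]
      rw [hF0']
      exact this
    · -- fiber over k ⊆ {m+k, m-k}
      have hne : m + (k:ℤ) ≠ m - (k:ℤ) := by omega
      have hsub : I.filter (fun i => φ i = k) ⊆ {m + (k:ℤ), m - (k:ℤ)} := by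
        intro i hi
        rw [Finset.mem_filter] at hi
        have : (i - m).natAbs = k := hi.2
        simp only [Finset.mem_insert, Finset.mem_singleton]
        omega
      have hle := Finset.sum_le_sum_of_subset_of_nonneg hsub
        (fun i _ _ => (gg_pos (u - 2*i)).le)
      rw [Finset.sum_pair hne] at hle
      have e1 : u - 2*((m + (k:ℤ) : ℤ):ℝ) = -(2*(k:ℝ) - d) := by push_cast [hd']; ring
      have e2 : u - 2*((m - (k:ℤ) : ℤ):ℝ) = 2*(k:ℝ) + d := by push_cast [hd']; ring
      rw [e1, e2, gg_neg] at hle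
      calc ∑ i ∈ I.filter (fun i => φ i = k), gg (u - 2*i)
          ≤ gg (2*(k:ℝ) - d) + gg (2*(k:ℝ) + d) := hle
        _ = F k := by rw [hF]; simp [hk]
  have step1' : ∑ k ∈ I.image φ, ∑ i ∈ I.filter (fun i => φ i = k), gg (u - 2*i)
      ≤ ∑ k ∈ I.image φ, F k := Finset.sum_le_sum step1
  set T : Finset ℕ := (I.image φ).erase 0 with hT'
  have hT0 : 0 ∉ T := Finset.notMem_erase _ _
  have step2 : ∑ k ∈ I.image φ, F k ≤ F 0 + ∑ k ∈ T, F k := by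
    have hsub : I.image φ ⊆ insert 0 T := by
      intro a ha
      rcases eq_or_ne a 0 with rfl | h
      · exact Finset.mem_insert_self _ _
      · exact Finset.mem_insert_of_mem (Finset.mem_erase.2 ⟨h, ha⟩)
    have := Finset.sum_le_sum_of_subset_of_nonneg hsub (fun k _ _ => hF_nonneg k)
    rwa [Finset.sum_insert hT0] at this
  have step3 : ∑ k ∈ T, F k = ∑ k ∈ T, (gg (2*(k:ℝ) - d) + gg (2*(k:ℝ) + d)) := by
    apply Finset.sum_congr rfl
    intro k hk
    have : k ≠ 0 := Finset.ne_of_mem_erase hk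
    rw [hF]; simp [this]
  have hcore := core d hd T hT0
  have hfinal := partial_le_S T hT0
  have hF0 : F 0 = gg d := by rw [hF]; simp
  calc ∑ i ∈ I, gg (u - 2*i)
      = ∑ k ∈ I.image φ, ∑ i ∈ I.filter (fun i => φ i = k), gg (u - 2*i) := hfiber.symm
    _ ≤ ∑ k ∈ I.image φ, F k := step1'
    _ ≤ F 0 + ∑ k ∈ T, F k := step2
    _ = gg d + ∑ k ∈ T, (gg (2*(k:ℝ) - d) + gg (2*(k:ℝ) + d)) := by rw [hF0, step3]
    _ ≤ gg d + ((1 - gg d) + ∑ k ∈ T, 2 * gg (2*(k:ℝ))) := by linarith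
    _ = 1 + ∑ k ∈ T, 2 * gg (2*(k:ℝ)) := by ring
    _ ≤ ∑' n : ℤ, gg (2*(n:ℝ)) := hfinal

theorem stmt14 (c : ℝ) (K : ℕ) (hc : 0 < c) (hK : 2 ≤ K)
    (σ : ℝ) (hσ : σ = 0.3)
    (b : ℝ → ℝ)
    (hb : ∀ y, b y = 1 / (σ * Real.sqrt (2 * Real.pi)) * Real.exp (-(y ^ 2) / (2 * σ ^ 2)))
    (τ : ℤ → ℝ → ℝ)
    (hτ : ∀ (i : ℤ) (x : ℝ), τ i x = c / K * b (2 * K * x / c - 2 * i + 1))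
    (H : ℝ)
    (hH : H = 1 / (σ * Real.sqrt (2 * Real.pi)) *
      ∑' n : ℤ, Real.exp (-(2 * (n : ℝ) ^ 2) / σ ^ 2))
    (I : Finset ℤ) (x : ℝ) :
    ∑ i ∈ I, τ i x ≤ H * (c / K) := by
  subst hσ
  set C : ℝ := 1 / (0.3 * Real.sqrt (2 * Real.pi)) with hCdef
  have hπ : 0 < Real.sqrt (2 * Real.pi) := Real.sqrt_pos.2 (by positivity)
  have hC : 0 < C := by rw [hCdef]; positivity
  have hKpos : (0:ℝ) < (K:ℝ) := by
    have : (2:ℝ) ≤ (K:ℝ) := by exact_mod_cast hK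
    linarith
  have hck : 0 < c / (K:ℝ) := div_pos hc hKpos
  have hb' : ∀ y, b y = C * gg y := by
    intro y
    rw [hb y, hCdef]
    unfold gg
    rw [show -(y ^ 2) / (2 * (0.3:ℝ) ^ 2) = -(50/9) * y^2 by
      rw [show (2 * (0.3:ℝ) ^ 2) = 9/50 by norm_num]; ring]
  have hHS : H = C * ∑' n : ℤ, gg (2*(n:ℝ)) := by
    rw [hH, hCdef]
    congr 1
    apply tsum_congr
    intro n
    unfold gg
    rw [show -(2 * (n:ℝ) ^ 2) / (0.3:ℝ) ^ 2 = -(50/9) * (2*(n:ℝ))^2 by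
      rw [show ((0.3:ℝ) ^ 2) = 9/100 by norm_num]; ring]
  set u : ℝ := 2 * K * x / c + 1 with hu
  have hsum : ∑ i ∈ I, τ i x = (c / K * C) * ∑ i ∈ I, gg (u - 2*i) := by
    rw [Finset.mul_sum]
    apply Finset.sum_congr rfl
    intro i _
    rw [hτ, hb']
    rw [show 2 * (K:ℝ) * x / c - 2 * (i:ℝ) + 1 = u - 2*(i:ℝ) by rw [hu]; ring]
    ring
  rw [hsum, hHS]
  calc (c / K * C) * ∑ i ∈ I, gg (u - 2*i)
      ≤ (c / K * C) * ∑' n : ℤ, gg (2*(n:ℝ)) := by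
        apply mul_le_mul_of_nonneg_left (main_ineq u I) (le_of_lt (mul_pos hck hC))
    _ = C * (∑' n : ℤ, gg (2*(n:ℝ))) * (c / K) := by ring
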